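/- (Gronwall-type lemma, version 2) Let α ∈ (0,1), C > 0, let N ∈ L¹(0,r₀) be nonnegative, and let E : (0,r₀] → [0,∞) be absolutely continuous and differentiable a.e., satisfying E(r) ≤ (r + C·r^{1+α})·E'(r) + C·N(r)·r² for a.e. r ∈ (0,r₀]. Then lim_{r→0⁺} E(r)/r exists and is finite. -/

import Mathlib

open MeasureTheory Set Filter intervalIntegral
open scoped Topology

private lemma gron_hasDerivW {α C x : ℝ} (hα : 0 < α) (hC : 0 < C) (hx : 0 < x) :
    HasDerivAt (fun y : ℝ => (C * y ^ α + 1) ^ (1/α) / y)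
      (-((C * x ^ α + 1) ^ (1/α - 1) / x ^ 2)) x := by
  have hB : 0 < C * x ^ α + 1 := by positivity
  have h1 : HasDerivAt (fun y : ℝ => C * y ^ α + 1) (C * (α * x ^ (α - 1))) x :=
    ((Real.hasDerivAt_rpow_const (p := α) (Or.inl hx.ne')).const_mul C).add_const 1
  have h2 := h1.rpow_const (p := 1/α) (Or.inl hB.ne')
  have h3 := h2.div (hasDerivAt_id x) hx.ne'
  convert h3 using 1 <;> try rfl
  have hxα : x ^ (α - 1) * x = x ^ α := by
    rw [Real.rpow_sub hx, Real.rpow_one]; field_simp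
  have h4 : (C * x ^ α + 1) ^ (1/α) = (C * x ^ α + 1) ^ (1/α - 1) * (C * x ^ α + 1) := by
    rw [Real.rpow_sub hB, Real.rpow_one]; field_simp
  have hαα : α * (1/α) = 1 := by field_simp
  have hnum : C * (α * x ^ (α - 1)) * (1 / α) * (C * x ^ α + 1) ^ (1/α - 1) * id x
      - (C * x ^ α + 1) ^ (1/α) * 1 = -((C * x ^ α + 1) ^ (1/α - 1)) := by
    rw [h4]
    have : C * (α * x ^ (α - 1)) * (1 / α) * (C * x ^ α + 1) ^ (1/α - 1) * id x
        = C * (x ^ (α - 1) * x) * (α * (1/α)) * (C * x ^ α + 1) ^ (1/α - 1) := by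
      simp only [id]; ring
    rw [this, hxα, hαα]; ring
  rw [hnum]
  simp only [id]
  rw [neg_div]
private lemma gron_Wident {α C x : ℝ} (hα : 0 < α) (hC : 0 < C) (hx : 0 < x) :
    (C * x ^ α + 1) ^ (1/α) / x
      = (x + C * x ^ (1+α)) * ((C * x ^ α + 1) ^ (1/α - 1) / x ^ 2) := by
  have hB : 0 < C * x ^ α + 1 := by positivity
  have h1 : x ^ ((1:ℝ)+α) = x * x ^ α := by
    rw [Real.rpow_add hx, Real.rpow_one]
  have h4 : (C * x ^ α + 1) ^ (1/α) = (C * x ^ α + 1) ^ (1/α - 1) * (C * x ^ α + 1) := by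
    rw [Real.rpow_sub hB, Real.rpow_one]; field_simp
  rw [h1, h4]
  field_simp
  ring

private lemma gron_locInt {r₀ : ℝ} {E : ℝ → ℝ} (hr₀ : 0 < r₀)
    (hAC : ∀ s ∈ Set.Ioc 0 r₀, ∀ t ∈ Set.Ioc 0 r₀, s ≤ t →
      E t - E s = ∫ x in s..t, deriv E x)
    {s t : ℝ} (hs : 0 < s) (ht : t ≤ r₀) :
    IntegrableOn (deriv E) (Set.Ioc s t) volume := by
  by_contra hcon
  have hst : s < t := by
    by_contra h
    push_neg at h
    rw [Set.Ioc_eq_empty (by exact fun h' => absurd h' (not_lt.2 h))] at hcon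
    exact hcon (integrableOn_empty)
  -- Step A : find a bad point
  have hbad : ∃ x ∈ Set.Icc s t, ∀ δ > 0,
      ¬ IntegrableOn (deriv E) (Set.Ioc s t ∩ Set.Icc (x-δ) (x+δ)) volume := by
    by_contra hno
    push_neg at hno
    choose δ hδpos hδint using hno
    set U : Set.Icc s t → Set ℝ := fun i => Set.Ioo (i.1 - δ i.1 i.2) (i.1 + δ i.1 i.2) with hU
    have hcov : Set.Icc s t ⊆ ⋃ i, U i := by
      intro x hx
      exact Set.mem_iUnion.2 ⟨⟨x, hx⟩, by
        simp only [hU, Set.mem_Ioo]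
        constructor <;> nlinarith [hδpos x hx]⟩
    obtain ⟨F, hF⟩ := isCompact_Icc.elim_finite_subcover U
      (fun i => isOpen_Ioo) hcov
    apply hcon
    have : Set.Ioc s t ⊆ ⋃ i ∈ F, (Set.Ioc s t ∩ U i) := by
      intro x hx
      obtain ⟨i, hiF, hiU⟩ := Set.mem_iUnion₂.1 (hF (Set.Ioc_subset_Icc_self hx))
      exact Set.mem_iUnion₂.2 ⟨i, hiF, hx, hiU⟩
    apply IntegrableOn.mono_set _ this
    apply (integrableOn_finset_iUnion).2
    intro i hiF
    apply (hδint i.1 i.2).mono_set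
    intro x hx
    exact ⟨hx.1, Set.Ioo_subset_Icc_self hx.2⟩
  obtain ⟨x, hxmem, hx⟩ := hbad
  -- Step B: E is constant away from x
  have key : ∀ u v : ℝ, u ∈ Set.Icc s t → v ∈ Set.Icc s t → u < v →
      (u = s ∨ u < x) → (v = t ∨ x < v) → E u = E v := by
    intro u v hu hv huv hul hvr
    set δ : ℝ := min (if u = s then 1 else (x - u)/2) (if v = t then 1 else v - x) with hδ
    have hδpos : 0 < δ := by
      apply lt_min
      · rcases eq_or_ne u s with h | h
        · simp [h]
        · rw [if_neg h]
          rcases hul with h' | h'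
          · exact absurd h' h
          · linarith
      · rcases eq_or_ne v t with h | h
        · simp [h]
        · rw [if_neg h]
          rcases hvr with h' | h'
          · exact absurd h' h
          · linarith
    have hsub : Set.Ioc s t ∩ Set.Icc (x-δ) (x+δ) ⊆ Set.Ioc u v := by
      rintro y ⟨⟨hy1, hy2⟩, hy3, hy4⟩
      constructor
      · rcases eq_or_ne u s with h | h
        · rw [h]; exact hy1
        · have hux : u < x := by rcases hul with h' | h'; exact absurd h' h; exact h'
          have hδle : δ ≤ (x - u)/2 := by rw [hδ]; simpa [if_neg h] using min_le_left _ _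
          linarith
      · rcases eq_or_ne v t with h | h
        · rw [h]; exact hy2
        · have hδle : δ ≤ v - x := by rw [hδ]; simpa [if_neg h] using min_le_right _ _
          linarith
    have hnii : ¬ IntervalIntegrable (deriv E) volume u v := by
      intro hi
      rw [intervalIntegrable_iff_integrableOn_Ioc_of_le huv.le] at hi
      exact hx δ hδpos (hi.mono_set hsub)
    have := hAC u ⟨lt_of_lt_of_le hs hu.1, le_trans hu.2 ht⟩ v
      ⟨lt_of_lt_of_le hs (le_trans hu.1 huv.le), le_trans hv.2 ht⟩ huv.le
    rw [intervalIntegral.integral_undef hnii] at this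
    linarith
  have hval : ∀ y ∈ Set.Icc s t, y ≠ x → E y = E s := by
    intro y hy hyx
    have hEst : E s = E t := key s t ⟨le_refl s, hst.le⟩ ⟨hst.le, le_refl t⟩ hst
      (Or.inl rfl) (Or.inl rfl)
    rcases lt_trichotomy y x with h | h | h
    · rcases eq_or_lt_of_le hy.1 with h' | h'
      · rw [← h']
      · have := key y t hy ⟨hst.le, le_refl t⟩ (lt_of_lt_of_le h (hxmem.2))
          (Or.inr h) (Or.inl rfl)
        -- y < t needed : y < x ≤ t
        rw [this, ← hEst]
    · exact absurd h hyx
    · have hsy : s < y := lt_of_le_of_lt hxmem.1 h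
      exact (key s y ⟨le_refl s, hst.le⟩ hy hsy (Or.inl rfl) (Or.inr h)).symm
  have hderiv0 : ∀ y ∈ Set.Ioo s t, y ≠ x → deriv E y = 0 := by
    intro y hy hyx
    have hopen : IsOpen (Set.Ioo s t ∩ {x}ᶜ) := isOpen_Ioo.inter isOpen_compl_singleton
    have hmem : Set.Ioo s t ∩ {x}ᶜ ∈ 𝓝 y := hopen.mem_nhds ⟨hy, hyx⟩
    have heq : E =ᶠ[𝓝 y] fun _ => E s := by
      filter_upwards [hmem] with z hz
      exact hval z (Set.Ioo_subset_Icc_self hz.1) hz.2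
    rw [heq.deriv_eq, deriv_const]
  apply hcon
  have hae : deriv E =ᵐ[volume.restrict (Set.Ioc s t)] (fun _ => 0) := by
    rw [Filter.EventuallyEq, ae_restrict_iff' measurableSet_Ioc]
    have h1 : ({t} : Set ℝ)ᶜ ∈ ae volume := compl_mem_ae_iff.2 (measure_singleton t)
    have h2 : ({x} : Set ℝ)ᶜ ∈ ae volume := compl_mem_ae_iff.2 (measure_singleton x)
    filter_upwards [h1, h2] with y hy1 hy2 hy3
    exact hderiv0 y ⟨hy3.1, lt_of_le_of_ne hy3.2 hy1⟩ hy2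
  exact (integrable_zero _ _ _).congr hae.symm
private lemma gron_parts {D Φ Φ' E : ℝ → ℝ} {s t : ℝ} (hst : s < t)
    (hDmeas : Measurable D) (hΦ'meas : Measurable Φ')
    (hD : IntegrableOn D (Set.Ioc s t) volume)
    (hΦ : ∀ x ∈ Set.Icc s t, HasDerivAt Φ (Φ' x) x)
    (hΦ'c : ContinuousOn Φ' (Set.Icc s t))
    (hE : ∀ x ∈ Set.Icc s t, E x = E s + ∫ u in Set.Ioc s x, D u) :
    IntegrableOn (fun x => D x * Φ x + E x * Φ' x) (Set.Ioc s t) volume ∧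
    ∫ x in Set.Ioc s t, (D x * Φ x + E x * Φ' x) = E t * Φ t - E s * Φ s := by
  have hΦc : ContinuousOn Φ (Set.Icc s t) :=
    fun x hx => (hΦ x hx).continuousAt.continuousWithinAt
  have hDIcc : IntegrableOn D (Set.Icc s t) volume :=
    (integrableOn_Icc_iff_integrableOn_Ioc).2 hD
  have hprim : ContinuousOn (fun x => ∫ u in Set.Ioc s x, D u) (Set.Icc s t) :=
    intervalIntegral.continuousOn_primitive hDIcc
  have hEc : ContinuousOn E (Set.Icc s t) :=
    (continuousOn_const.add hprim).congr (fun x hx => hE x hx)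
  obtain ⟨M1, hM1⟩ := isCompact_Icc.exists_bound_of_continuousOn hΦc
  obtain ⟨M2, hM2⟩ := isCompact_Icc.exists_bound_of_continuousOn hΦ'c
  have hM2nn : 0 ≤ M2 := le_trans (norm_nonneg _) (hM2 s ⟨le_refl s, hst.le⟩)
  -- integrabilities
  have hΦaesm : AEStronglyMeasurable Φ (volume.restrict (Set.Ioc s t)) :=
    (hΦc.mono Set.Ioc_subset_Icc_self).aestronglyMeasurable measurableSet_Ioc
  have hi1 : IntegrableOn (fun x => D x * Φ x) (Set.Ioc s t) volume := by
    apply Integrable.mono' (hD.norm.const_mul M1)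
      (hDmeas.aestronglyMeasurable.restrict.mul hΦaesm)
    rw [ae_restrict_iff' measurableSet_Ioc]
    refine Filter.Eventually.of_forall fun x hx => ?_
    simp only [Pi.mul_apply, norm_mul]
    calc ‖D x‖ * ‖Φ x‖ ≤ ‖D x‖ * M1 :=
          mul_le_mul_of_nonneg_left (hM1 x (Set.Ioc_subset_Icc_self hx)) (norm_nonneg _)
      _ = M1 * ‖D x‖ := mul_comm _ _
  have hi2 : IntegrableOn (fun x => E x * Φ' x) (Set.Ioc s t) volume :=
    ((hEc.mul hΦ'c).integrableOn_Icc).mono_set Set.Ioc_subset_Icc_self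
  refine ⟨hi1.add hi2, ?_⟩
  -- FTC for Φ'
  have hFTC : ∀ u ∈ Set.Icc s t, ∫ x in Set.Ioc u t, Φ' x = Φ t - Φ u := by
    intro u hu
    have h1 : ∫ x in u..t, Φ' x = Φ t - Φ u := by
      apply intervalIntegral.integral_eq_sub_of_hasDerivAt
      · intro x hx
        rw [Set.uIcc_of_le hu.2] at hx
        exact hΦ x ⟨le_trans hu.1 hx.1, hx.2⟩
      · exact (hΦ'c.mono (Set.Icc_subset_Icc hu.1 (le_refl t))).intervalIntegrable_of_Icc hu.2
    rw [intervalIntegral.integral_of_le hu.2] at h1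
    exact h1
  have hEt : ∫ u in Set.Ioc s t, D u = E t - E s := by
    have := hE t ⟨hst.le, le_refl t⟩; linarith
  -- Fubini
  set μ := volume.restrict (Set.Ioc s t) with hμ
  have hfin : volume (Set.Ioc s t) < ⊤ := measure_Ioc_lt_top
  set H : ℝ → ℝ → ℝ := fun x u => (Set.Iic x).indicator D u * Φ' x with hH
  have hHint : Integrable (Function.uncurry H) (μ.prod μ) := by
    have hKeq : Function.uncurry H = fun p : ℝ × ℝ =>
        Set.indicator {q : ℝ × ℝ | q.2 ≤ q.1} (fun q => D q.2 * Φ' q.1) p := by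
      funext p
      by_cases h : p.2 ≤ p.1
      · simp [hH, Function.uncurry, Set.indicator, h]
      · simp [hH, Function.uncurry, Set.indicator, h]
    rw [hKeq]
    have mset : MeasurableSet {q : ℝ × ℝ | q.2 ≤ q.1} :=
      (isClosed_le continuous_snd continuous_fst).measurableSet
    apply Integrable.mono' (g := fun p : ℝ × ℝ => M2 * ‖D p.2‖)
    · exact Integrable.mul_prod ((integrableOn_const_iff (C := M2)).2 (Or.inr hfin)) hD.norm
    · exact (((hDmeas.comp measurable_snd).mul
        (hΦ'meas.comp measurable_fst)).indicator mset).aestronglyMeasurable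
    · rw [hμ, Measure.prod_restrict, ae_restrict_iff' (measurableSet_Ioc.prod measurableSet_Ioc)]
      refine Filter.Eventually.of_forall fun p hp => ?_
      by_cases h : p.2 ≤ p.1
      · rw [Set.indicator_apply, if_pos (show p ∈ {q : ℝ × ℝ | q.2 ≤ q.1} from h)]
        rw [norm_mul]
        calc ‖D p.2‖ * ‖Φ' p.1‖ ≤ ‖D p.2‖ * M2 :=
              mul_le_mul_of_nonneg_left (hM2 p.1 (Set.Ioc_subset_Icc_self hp.1)) (norm_nonneg _)
          _ = M2 * ‖D p.2‖ := mul_comm _ _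
      · rw [Set.indicator_apply, if_neg (show p ∉ {q : ℝ × ℝ | q.2 ≤ q.1} from h)]
        simp only [norm_zero]
        positivity
  have hswap := MeasureTheory.integral_integral_swap hHint
  -- left side of Fubini
  have hL : ∀ x ∈ Set.Ioc s t, (∫ u, H x u ∂μ) = (∫ u in Set.Ioc s x, D u) * Φ' x := by
    intro x hx
    show (∫ u, (Set.Iic x).indicator D u * Φ' x ∂μ) = (∫ u in Set.Ioc s x, D u) * Φ' x
    rw [MeasureTheory.integral_mul_const, MeasureTheory.integral_indicator measurableSet_Iic,
      hμ, Measure.restrict_restrict measurableSet_Iic]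
    have hset : Set.Iic x ∩ Set.Ioc s t = Set.Ioc s x := by
      ext y
      simp only [Set.mem_inter_iff, Set.mem_Iic, Set.mem_Ioc]
      constructor
      · rintro ⟨h1, h2, h3⟩; exact ⟨h2, h1⟩
      · rintro ⟨h1, h2⟩; exact ⟨h2, h1, le_trans h2 hx.2⟩
    rw [hset]
  have hR : ∀ u ∈ Set.Ioc s t, (∫ x, H x u ∂μ) = D u * (Φ t - Φ u) := by
    intro u hu
    have e0 : (fun x => H x u) = fun x => D u * ((Set.Ici u).indicator Φ' x) := by
      funext x
      by_cases h : u ≤ x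
      · simp [hH, Set.indicator_of_mem, h, Set.mem_Iic, Set.mem_Ici]
      · simp [hH, Set.indicator_of_notMem, h, Set.mem_Iic, Set.mem_Ici]
    rw [e0, MeasureTheory.integral_const_mul, MeasureTheory.integral_indicator measurableSet_Ici,
      hμ, Measure.restrict_restrict measurableSet_Ici]
    have e1 : Set.Ici u ∩ Set.Ioc s t = Set.Icc u t := by
      ext y
      simp only [Set.mem_inter_iff, Set.mem_Ici, Set.mem_Ioc, Set.mem_Icc]
      constructor
      · rintro ⟨h1, h2, h3⟩; exact ⟨h1, h3⟩
      · rintro ⟨h1, h2⟩; exact ⟨h1, lt_of_lt_of_le hu.1 h1, h2⟩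
    rw [e1, integral_Icc_eq_integral_Ioc, hFTC u (Set.Ioc_subset_Icc_self hu)]
  -- assemble Fubini
  have hFub : ∫ x in Set.Ioc s t, (∫ u in Set.Ioc s x, D u) * Φ' x
      = Φ t * (E t - E s) - ∫ u in Set.Ioc s t, D u * Φ u := by
    have e1 : ∫ x in Set.Ioc s t, (∫ u in Set.Ioc s x, D u) * Φ' x
        = ∫ x, (∫ u, H x u ∂μ) ∂μ :=
      setIntegral_congr_fun (μ := volume) measurableSet_Ioc fun x hx => (hL x hx).symm
    have e15 : ∫ x, (∫ u, H x u ∂μ) ∂μ = ∫ u, (∫ x, H x u ∂μ) ∂μ := hswap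
    have e2 : ∫ u, (∫ x, H x u ∂μ) ∂μ = ∫ u in Set.Ioc s t, D u * (Φ t - Φ u) :=
      setIntegral_congr_fun (μ := volume) measurableSet_Ioc fun u hu => hR u hu
    have e3 : ∫ u in Set.Ioc s t, D u * (Φ t - Φ u)
        = Φ t * (E t - E s) - ∫ u in Set.Ioc s t, D u * Φ u := by
      have e4 : ∀ u, D u * (Φ t - Φ u) = Φ t * D u - D u * Φ u := fun u => by ring
      simp_rw [e4]
      rw [MeasureTheory.integral_sub (hD.const_mul (Φ t)) hi1,
        MeasureTheory.integral_const_mul, hEt]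
    rw [e1, e15, e2, e3]
  -- final assembly
  have hi2a : IntegrableOn (fun x => E s * Φ' x) (Set.Ioc s t) volume :=
    ((hΦ'c.integrableOn_Icc).mono_set Set.Ioc_subset_Icc_self).const_mul (E s)
  have hi2b : IntegrableOn (fun x => (∫ u in Set.Ioc s x, D u) * Φ' x) (Set.Ioc s t) volume :=
    ((hprim.mul hΦ'c).integrableOn_Icc).mono_set Set.Ioc_subset_Icc_self
  have hEφ' : ∫ x in Set.Ioc s t, E x * Φ' x
      = (∫ x in Set.Ioc s t, E s * Φ' x)
        + ∫ x in Set.Ioc s t, (∫ u in Set.Ioc s x, D u) * Φ' x := by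
    rw [← MeasureTheory.integral_add hi2a hi2b]
    apply setIntegral_congr_fun measurableSet_Ioc
    intro x hx
    simp only
    rw [hE x (Set.Ioc_subset_Icc_self hx)]; ring
  have hconst : ∫ x in Set.Ioc s t, E s * Φ' x = E s * (Φ t - Φ s) := by
    rw [MeasureTheory.integral_const_mul, hFTC s ⟨le_refl s, hst.le⟩]
  rw [MeasureTheory.integral_add hi1 hi2, hEφ', hconst, hFub]
  ring

private noncomputable def gronP (α C : ℝ) : ℝ → ℝ := fun x => (C * x ^ α + 1) ^ (1/α - 1)
private noncomputable def gronW (α C : ℝ) : ℝ → ℝ := fun x => (C * x ^ α + 1) ^ (1/α) / x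
private noncomputable def gronF (α C : ℝ) : ℝ → ℝ := fun x => -(gronP α C x / x ^ 2)

/-- (Gronwall-type lemma, version 2.) If `E : (0,r₀] → [0,∞)` is absolutely
continuous and satisfies `E(r) ≤ (r + C r^{1+α}) E'(r) + C N(r) r²` a.e., with
`α ∈ (0,1)`, `C > 0` and `N ∈ L¹(0,r₀)` nonnegative, then `lim_{r→0⁺} E(r)/r`
exists and is finite. -/
theorem stmt11
    (α C r₀ : ℝ) (hα : α ∈ Set.Ioo (0:ℝ) 1) (hC : 0 < C) (hr₀ : 0 < r₀)
    (N : ℝ → ℝ) (hNpos : ∀ r ∈ Set.Ioo 0 r₀, 0 ≤ N r)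
    (hNint : MeasureTheory.IntegrableOn N (Set.Ioo 0 r₀) volume)
    (E : ℝ → ℝ)
    (hnonneg : ∀ r ∈ Set.Ioc 0 r₀, 0 ≤ E r)
    (hAC : ∀ s ∈ Set.Ioc 0 r₀, ∀ t ∈ Set.Ioc 0 r₀, s ≤ t →
      E t - E s = ∫ x in s..t, deriv E x)
    (hineq : ∀ᵐ r ∂(volume.restrict (Set.Ioc 0 r₀)),
      E r ≤ (r + C * r ^ (1 + α)) * deriv E r + C * N r * r ^ 2) :
    ∃ l : ℝ, Tendsto (fun r => E r / r) (𝓝[>] (0:ℝ)) (𝓝 l) := by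
  obtain ⟨hα0, hα1⟩ := hα
  have hexp : (0:ℝ) ≤ 1/α - 1 := by
    have : 1 ≤ 1/α := by rw [le_div_iff₀ hα0]; linarith
    linarith
  have hBpos : ∀ x : ℝ, 0 < x → 0 < C * x ^ α + 1 := by
    intro x hx
    have : 0 < x ^ α := Real.rpow_pos_of_pos hx α
    nlinarith
  have hPpos : ∀ x : ℝ, 0 < x → 0 < gronP α C x :=
    fun x hx => Real.rpow_pos_of_pos (hBpos x hx) _
  have hWpos : ∀ x : ℝ, 0 < x → 0 < gronW α C x :=
    fun x hx => div_pos (Real.rpow_pos_of_pos (hBpos x hx) _) hx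
  have hPcont : Continuous (gronP α C) :=
    (Real.continuous_rpow_const hexp).comp
      ((continuous_const.mul (Real.continuous_rpow_const hα0.le)).add continuous_const)
  have hΦ'meas : Measurable (gronF α C) :=
    ((hPcont.measurable).div ((continuous_pow 2).measurable)).neg
  have hΦ'cont : ∀ u v : ℝ, 0 < u → ContinuousOn (gronF α C) (Set.Icc u v) := by
    intro u v hu x hx
    have hx0 : 0 < x := lt_of_lt_of_le hu hx.1
    exact (((hPcont.continuousAt).div (continuousAt_pow x 2)
      (pow_ne_zero 2 hx0.ne')).neg).continuousWithinAt
  have hWder : ∀ x : ℝ, 0 < x → HasDerivAt (gronW α C) (gronF α C x) x :=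
    fun x hx => gron_hasDerivW hα0 hC hx
  -- the density g and its integrability
  set K : ℝ := (C * r₀ ^ α + 1) ^ (1/α - 1) with hK
  have hKpos : 0 < K := Real.rpow_pos_of_pos (hBpos r₀ hr₀) _
  have hPle : ∀ x ∈ Set.Ioc (0:ℝ) r₀, gronP α C x ≤ K := by
    intro x hx
    apply Real.rpow_le_rpow (hBpos x hx.1).le _ hexp
    have : x ^ α ≤ r₀ ^ α := Real.rpow_le_rpow hx.1.le hx.2 hα0.le
    nlinarith
  set g : ℝ → ℝ := fun x => C * N x * gronP α C x with hgdef
  have hNIoc : IntegrableOn N (Set.Ioc 0 r₀) volume :=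
    hNint.congr_set_ae (Filter.EventuallyEq.symm Ioo_ae_eq_Ioc)
  have hgint : IntegrableOn g (Set.Ioc 0 r₀) volume := by
    apply Integrable.mono' (hNIoc.norm.const_mul (C * K))
      ((hNIoc.aestronglyMeasurable.const_mul C).mul
        (hPcont.measurable.aestronglyMeasurable.restrict))
    rw [ae_restrict_iff' measurableSet_Ioc]
    refine Filter.Eventually.of_forall fun x hx => ?_
    simp only [Pi.mul_apply]
    have h1 : ‖C * N x * gronP α C x‖ = C * ‖N x‖ * gronP α C x := by
      rw [norm_mul, norm_mul, Real.norm_of_nonneg hC.le,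
        Real.norm_of_nonneg (hPpos x hx.1).le]
    rw [h1]
    calc C * ‖N x‖ * gronP α C x ≤ C * ‖N x‖ * K :=
          mul_le_mul_of_nonneg_left (hPle x hx) (by positivity)
      _ = C * K * ‖N x‖ := by ring
  have hgr : ∀ r : ℝ, r ≤ r₀ → IntegrableOn g (Set.Ioc 0 r) volume :=
    fun r hr => hgint.mono_set (Set.Ioc_subset_Ioc_right hr)
  set G : ℝ → ℝ := fun r => ∫ u in Set.Ioc 0 r, g u with hGdef
  set ψ : ℝ → ℝ := fun r => E r * gronW α C r + G r with hψdef
  -- monotonicity of ψ on Ioo 0 r₀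
  have hmono : MonotoneOn ψ (Set.Ioo 0 r₀) := by
    intro u hu v hv huv
    rcases eq_or_lt_of_le huv with rfl | hlt
    · exact le_refl _
    have hEexp : ∀ x ∈ Set.Icc u v, E x = E u + ∫ w in Set.Ioc u x, deriv E w := by
      intro x hx
      have hx0 : 0 < x := lt_of_lt_of_le hu.1 hx.1
      have h := hAC u ⟨hu.1, hu.2.le⟩ x ⟨hx0, le_trans hx.2 hv.2.le⟩ hx.1
      rw [intervalIntegral.integral_of_le hx.1] at h
      linarith
    obtain ⟨hint, hpar⟩ := gron_parts hlt (measurable_deriv E) hΦ'meas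
      (gron_locInt hr₀ hAC hu.1 hv.2.le)
      (fun x hx => hWder x (lt_of_lt_of_le hu.1 hx.1))
      (hΦ'cont u v hu.1) hEexp
    have hgle : ∀ᵐ x ∂(volume.restrict (Set.Ioc u v)),
        -(g x) ≤ deriv E x * gronW α C x + E x * gronF α C x := by
      have hsub : Set.Ioc u v ⊆ Set.Ioc 0 r₀ := Set.Ioc_subset_Ioc hu.1.le hv.2.le
      filter_upwards [ae_restrict_of_ae_restrict_of_subset hsub hineq,
        ae_restrict_mem measurableSet_Ioc] with x hx1 hx2
      have hx0 : 0 < x := lt_trans hu.1 hx2.1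
      have hxα : 0 < x ^ (1+α) := Real.rpow_pos_of_pos hx0 _
      have hA : 0 < x + C * x ^ (1+α) := by nlinarith
      have hPx : 0 < gronP α C x / x ^ 2 := div_pos (hPpos x hx0) (by positivity)
      have hWid : gronW α C x = (x + C * x ^ (1+α)) * (gronP α C x / x ^ 2) :=
        gron_Wident hα0 hC hx0
      have h5 : -(C * N x * x ^ 2) ≤ deriv E x * (x + C * x ^ (1+α)) - E x := by linarith
      have h6 := mul_le_mul_of_nonneg_left h5 hPx.le
      have h7 : (gronP α C x / x ^ 2) * (-(C * N x * x ^ 2)) = -(g x) := by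
        rw [hgdef]
        field_simp
      have h8 : deriv E x * gronW α C x + E x * gronF α C x
          = (gronP α C x / x ^ 2) * (deriv E x * (x + C * x ^ (1+α)) - E x) := by
        rw [hWid]
        show deriv E x * ((x + C * x ^ (1+α)) * (gronP α C x / x ^ 2))
            + E x * (-(gronP α C x / x ^ 2)) = _
        ring
      calc -(g x) = (gronP α C x / x ^ 2) * (-(C * N x * x ^ 2)) := h7.symm
        _ ≤ (gronP α C x / x ^ 2) * (deriv E x * (x + C * x ^ (1+α)) - E x) := h6
        _ = deriv E x * gronW α C x + E x * gronF α C x := h8.symm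
    have hguv : IntegrableOn g (Set.Ioc u v) volume :=
      (hgr v hv.2.le).mono_set (Set.Ioc_subset_Ioc_left hu.1.le)
    have hle : -(∫ x in Set.Ioc u v, g x)
        ≤ ∫ x in Set.Ioc u v, (deriv E x * gronW α C x + E x * gronF α C x) := by
      rw [← MeasureTheory.integral_neg]
      exact MeasureTheory.integral_mono_ae hguv.neg hint hgle
    have hGsplit : G v = G u + ∫ x in Set.Ioc u v, g x := by
      show (∫ u in Set.Ioc 0 v, g u) = (∫ x in Set.Ioc 0 u, g x) + ∫ x in Set.Ioc u v, g x
      rw [← MeasureTheory.setIntegral_union (Set.Ioc_disjoint_Ioc_of_le le_rfl) measurableSet_Ioc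
        (hgr u hu.2.le) hguv, Set.Ioc_union_Ioc_eq_Ioc hu.1.le huv]
    show E u * gronW α C u + G u ≤ E v * gronW α C v + G v
    linarith [hle, hpar, hGsplit]
  -- ψ nonnegative
  have hψ0 : ∀ r ∈ Set.Ioo (0:ℝ) r₀, 0 ≤ ψ r := by
    intro r hr
    have h1 : 0 ≤ E r * gronW α C r :=
      mul_nonneg (hnonneg r ⟨hr.1, hr.2.le⟩) (hWpos r hr.1).le
    have h2 : 0 ≤ G r := by
      apply MeasureTheory.setIntegral_nonneg measurableSet_Ioc
      intro x hx
      have hx0 : 0 < x := hx.1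
      have hxr : x < r₀ := lt_of_le_of_lt hx.2 hr.2
      exact mul_nonneg (mul_nonneg hC.le (hNpos x ⟨hx0, hxr⟩)) (hPpos x hx0).le
    show 0 ≤ E r * gronW α C r + G r
    linarith
  -- limit of ψ
  have hne : (Set.Ioo (0:ℝ) r₀).Nonempty := ⟨r₀/2, by constructor <;> linarith⟩
  have hbdd : BddBelow (ψ '' Set.Ioo (0:ℝ) r₀) := by
    refine ⟨0, ?_⟩
    rintro y ⟨r, hr, rfl⟩
    exact hψ0 r hr
  have hψlim : Tendsto ψ (𝓝[>] (0:ℝ)) (𝓝 (sInf (ψ '' Set.Ioo (0:ℝ) r₀))) :=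
    MonotoneOn.tendsto_nhdsWithin_Ioo_right hne hmono hbdd
  set L : ℝ := sInf (ψ '' Set.Ioo (0:ℝ) r₀) with hL
  -- G tends to 0
  have hGlim : Tendsto G (𝓝[>] (0:ℝ)) (𝓝 0) := by
    set gbar : ℝ → ℝ := (Set.Ioc (0:ℝ) r₀).indicator g with hgbar
    have hgbarint : Integrable gbar volume := hgint.integrable_indicator measurableSet_Ioc
    have hcont : Continuous fun r => ∫ x in (0:ℝ)..r, gbar x :=
      hgbarint.continuous_primitive 0
    have h0 : Tendsto (fun r => ∫ x in (0:ℝ)..r, gbar x) (𝓝[>] (0:ℝ)) (𝓝 0) := by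
      have := (hcont.tendsto 0).mono_left (nhdsWithin_le_nhds (s := Set.Ioi (0:ℝ)))
      simpa using this
    apply h0.congr'
    filter_upwards [Ioo_mem_nhdsGT hr₀] with r hr
    rw [intervalIntegral.integral_of_le hr.1.le]
    apply MeasureTheory.setIntegral_congr_fun measurableSet_Ioc
    intro x hx
    exact Set.indicator_of_mem (Set.Ioc_subset_Ioc_right hr.2.le hx) g
  -- E r * W r tends to L
  have hφlim : Tendsto (fun r => E r * gronW α C r) (𝓝[>] (0:ℝ)) (𝓝 L) := by
    have : Tendsto (fun r => ψ r - G r) (𝓝[>] (0:ℝ)) (𝓝 (L - 0)) := hψlim.sub hGlim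
    rw [sub_zero] at this
    apply this.congr
    intro r
    show ψ r - G r = E r * gronW α C r
    simp [hψdef]
  -- final scaling
  have hscale : Tendsto (fun r : ℝ => (C * r ^ α + 1) ^ (-(1/α))) (𝓝[>] (0:ℝ)) (𝓝 1) := by
    have t1 : Tendsto (fun r : ℝ => r ^ α) (𝓝[>] (0:ℝ)) (𝓝 0) := by
      have := (Real.continuousAt_rpow_const 0 α (Or.inr hα0.le)).tendsto.mono_left
        (nhdsWithin_le_nhds (s := Set.Ioi (0:ℝ)))
      simpa [Real.zero_rpow hα0.ne'] using this
    have t2 : Tendsto (fun r : ℝ => C * r ^ α + 1) (𝓝[>] (0:ℝ)) (𝓝 1) := by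
      have := (t1.const_mul C).add_const 1
      simpa using this
    have t3 := (Real.continuousAt_rpow_const 1 (-(1/α)) (Or.inl one_ne_zero)).tendsto.comp t2
    simpa [Real.one_rpow, Function.comp_def] using t3
  refine ⟨L, ?_⟩
  have hfinal : Tendsto (fun r => E r * gronW α C r * (C * r ^ α + 1) ^ (-(1/α)))
      (𝓝[>] (0:ℝ)) (𝓝 (L * 1)) := hφlim.mul hscale
  rw [mul_one] at hfinal
  apply hfinal.congr'
  filter_upwards [self_mem_nhdsWithin] with r hr
  have hr0 : (0:ℝ) < r := hr
  have hB := hBpos r hr0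
  show E r * gronW α C r * (C * r ^ α + 1) ^ (-(1/α)) = E r / r
  rw [Real.rpow_neg hB.le]
  show E r * ((C * r ^ α + 1) ^ (1/α) / r) * ((C * r ^ α + 1) ^ (1/α))⁻¹ = E r / r
  have hne' : (C * r ^ α + 1) ^ (1/α) ≠ 0 := (Real.rpow_pos_of_pos hB _).ne'
  field_simp
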